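/- Suppose the random sequence {w_k} has correlation bound Γ_w ≻ 0 for A, and W ≻ 0 satisfies the set inclusion A·𝔹(W,1) + 𝔹(Γ_w, r) ⊆ 𝔹(W,1) for some r ≥ 1. Then the matrix inequality A W Aᵀ + Γ_w ⪯ W holds. -/

import Mathlib

open Matrix MeasureTheory Pointwise

/-- The matrix of expectations `E[z wᵀ]`, entrywise. -/
noncomputable def covE {n : ℕ} {Ω : Type*} [MeasurableSpace Ω] (μ : Measure Ω)
    (z w : Ω → Fin n → ℝ) : Matrix (Fin n) (Fin n) ℝ :=
  Matrix.of fun i j => ∫ ω, z ω i * w ω j ∂μ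

/-- The Loewner order on real matrices: `A ⪯ B` iff `B - A` is positive semidefinite. -/
def LoeLE {n : ℕ} (A B : Matrix (Fin n) (Fin n) ℝ) : Prop := (B - A).PosSemidef

/-- The ellipsoid `𝔹(Γ, r) = {x : xᵀ Γ⁻¹ x ≤ r}` for a positive definite matrix `Γ`. -/
def ballInv {n : ℕ} (Γ : Matrix (Fin n) (Fin n) ℝ) (r : ℝ) : Set (Fin n → ℝ) :=
  {x | x ⬝ᵥ Γ⁻¹ *ᵥ x ≤ r}

private lemma dp_symm {n : ℕ} {M : Matrix (Fin n) (Fin n) ℝ} (hM : M.IsHermitian)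
    (x y : Fin n → ℝ) : x ⬝ᵥ M *ᵥ y = y ⬝ᵥ M *ᵥ x := by
  have hMT : Mᵀ = M := by simpa using hM.eq
  rw [dotProduct_mulVec, ← mulVec_transpose, hMT, dotProduct_comm]

private lemma dp_mulVec_left {n : ℕ} (M : Matrix (Fin n) (Fin n) ℝ)
    (x y : Fin n → ℝ) : x ⬝ᵥ M *ᵥ y = (Mᵀ *ᵥ x) ⬝ᵥ y := by
  rw [dotProduct_mulVec, mulVec_transpose]

/-- with a correlation bound `Γ_w ≻ 0` and `W ≻ 0`, the set inclusion
`A 𝔹(W,1) + 𝔹(Γ_w,r) ⊆ 𝔹(W,1)` for some `r ≥ 1` implies `A W Aᵀ + Γ_w ⪯ W`. -/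
theorem stmt_17 {n : ℕ} {Ω : Type*} [MeasurableSpace Ω] (μ : Measure Ω)
    [IsProbabilityMeasure μ]
    (A Γw W : Matrix (Fin n) (Fin n) ℝ) (hΓw : Γw.PosDef) (hW : W.PosDef)
    (w z : ℕ → Ω → Fin n → ℝ)
    (hz0 : ∀ ω, z 0 ω = 0)
    (hzrec : ∀ k ω, z (k + 1) ω = A *ᵥ z k ω + w k ω)
    (hcb : ∀ k, LoeLE
      (A * covE μ (z k) (w k) + covE μ (w k) (z k) * Aᵀ + covE μ (w k) (w k)) Γw)
    (r : ℝ) (hr : 1 ≤ r)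
    (hinc : (A *ᵥ ·) '' ballInv W 1 + ballInv Γw r ⊆ ballInv W 1) :
    LoeLE (A * W * Aᵀ + Γw) W := by
  clear hz0 hzrec hcb
  have hWdet : IsUnit W.det := (isUnit_iff_isUnit_det W).mp hW.isUnit
  have hΓdet : IsUnit Γw.det := (isUnit_iff_isUnit_det Γw).mp hΓw.isUnit
  have hAWAT : (A * W * Aᵀ).PosSemidef := by
    simpa using hW.posSemidef.mul_mul_conjTranspose_same A
  refine posSemidef_iff_dotProduct_mulVec.mpr ⟨?_, ?_⟩
  · exact hW.isHermitian.sub (hAWAT.isHermitian.add hΓw.isHermitian)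
  intro x
  rw [star_trivial]
  by_cases hx : x = 0
  · simp [hx]
  set a := x ⬝ᵥ (A * W * Aᵀ) *ᵥ x with ha
  set b := x ⬝ᵥ Γw *ᵥ x with hb
  set c := x ⬝ᵥ W *ᵥ x with hc
  have ha0 : 0 ≤ a := by simpa using (posSemidef_iff_dotProduct_mulVec.mp hAWAT).2 x
  have hb0 : 0 < b := by simpa using (posDef_iff_dotProduct_mulVec.mp hΓw).2 hx
  have hc0 : 0 < c := by simpa using (posDef_iff_dotProduct_mulVec.mp hW).2 hx
  have goalEq : x ⬝ᵥ (W - (A * W * Aᵀ + Γw)) *ᵥ x = c - (a + b) := by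
    simp [sub_mulVec, add_mulVec, dotProduct_sub, dotProduct_add, ha, hb, hc]
  rw [goalEq]
  -- the witnesses in the two balls
  set v : Fin n → ℝ := (W * Aᵀ) *ᵥ x with hv
  have hva : (Aᵀ *ᵥ x) ⬝ᵥ v = a := by
    rw [ha, mul_assoc A W Aᵀ, ← mulVec_mulVec,
      dp_mulVec_left A x ((W * Aᵀ) *ᵥ x)]
  set y₁ : Fin n → ℝ := if ha' : a = 0 then 0 else (Real.sqrt a)⁻¹ • v with hy₁
  set y₂ : Fin n → ℝ := (Real.sqrt b)⁻¹ • (Γw *ᵥ x) with hy₂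
  have hy₁mem : y₁ ∈ ballInv W 1 := by
    rw [hy₁]
    split_ifs with ha'
    · simp [ballInv]
    · have hap : 0 < a := lt_of_le_of_ne ha0 (Ne.symm ha')
      have hWiv : W⁻¹ *ᵥ v = Aᵀ *ᵥ x := by
        rw [hv, mulVec_mulVec, ← mul_assoc, nonsing_inv_mul W hWdet, one_mul]
      show ((Real.sqrt a)⁻¹ • v) ⬝ᵥ W⁻¹ *ᵥ ((Real.sqrt a)⁻¹ • v) ≤ 1
      rw [mulVec_smul, dotProduct_smul, smul_dotProduct, hWiv, dotProduct_comm, hva,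
        smul_eq_mul, smul_eq_mul, ← mul_assoc, ← mul_inv, Real.mul_self_sqrt ha0,
        inv_mul_cancel₀ (ne_of_gt hap)]
  have hy₂mem : y₂ ∈ ballInv Γw r := by
    have hGiv : Γw⁻¹ *ᵥ (Γw *ᵥ x) = x := by
      rw [mulVec_mulVec, nonsing_inv_mul Γw hΓdet, one_mulVec]
    show ((Real.sqrt b)⁻¹ • (Γw *ᵥ x)) ⬝ᵥ Γw⁻¹ *ᵥ ((Real.sqrt b)⁻¹ • (Γw *ᵥ x)) ≤ r
    rw [mulVec_smul, dotProduct_smul, smul_dotProduct, hGiv, dotProduct_comm, ← hb,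
      smul_eq_mul, smul_eq_mul, ← mul_assoc, ← mul_inv, Real.mul_self_sqrt hb0.le,
      inv_mul_cancel₀ (ne_of_gt hb0)]
    exact hr
  set s : Fin n → ℝ := A *ᵥ y₁ + y₂ with hs
  have hsmem : s ∈ ballInv W 1 :=
    hinc (Set.add_mem_add (Set.mem_image_of_mem _ hy₁mem) hy₂mem)
  set p := x ⬝ᵥ s with hp
  have hpeq : p = Real.sqrt a + Real.sqrt b := by
    rw [hp, hs, dotProduct_add]
    congr 1
    · rw [hy₁]
      split_ifs with ha'
      · simp [ha', Real.sqrt_eq_zero']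
      · rw [mulVec_smul, dotProduct_smul, dp_mulVec_left, hva, smul_eq_mul,
          inv_mul_eq_div, Real.div_sqrt]
    · rw [hy₂, dotProduct_smul, ← hb, smul_eq_mul, inv_mul_eq_div, Real.div_sqrt]
  set q := s ⬝ᵥ W⁻¹ *ᵥ s with hq
  have hq1 : q ≤ 1 := hsmem
  -- Cauchy–Schwarz via the discriminant trick
  set u : Fin n → ℝ := W⁻¹ *ᵥ s with hu
  have hWu : W *ᵥ u = s := by
    rw [hu, mulVec_mulVec, mul_nonsing_inv W hWdet, one_mulVec]
  have hxWu : x ⬝ᵥ W *ᵥ u = p := by rw [hWu, hp]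
  have huWx : u ⬝ᵥ W *ᵥ x = p := by rw [dp_symm hW.isHermitian, hxWu]
  have huWu : u ⬝ᵥ W *ᵥ u = q := by
    rw [hWu, hu, dotProduct_comm, hq]
  have key : 0 ≤ ((p / c) • x - u) ⬝ᵥ W *ᵥ ((p / c) • x - u) := by
    simpa using (posSemidef_iff_dotProduct_mulVec.mp hW.posSemidef).2 ((p / c) • x - u)
  have expand : ((p / c) • x - u) ⬝ᵥ W *ᵥ ((p / c) • x - u)
      = (p / c) ^ 2 * c - 2 * (p / c) * p + q := by
    rw [mulVec_sub, mulVec_smul, dotProduct_sub, sub_dotProduct, sub_dotProduct,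
      dotProduct_smul, dotProduct_smul, smul_dotProduct, smul_dotProduct,
      ← hc, hxWu, huWx, huWu]
    simp only [smul_eq_mul]
    ring
  rw [expand] at key
  have hcne : c ≠ 0 := ne_of_gt hc0
  have e1 : (p / c) ^ 2 * c = p ^ 2 / c := by field_simp
  have e2 : 2 * (p / c) * p = 2 * (p ^ 2 / c) := by field_simp
  rw [e1, e2] at key
  have hpq : p ^ 2 ≤ q * c := by
    rw [← div_le_iff₀ hc0]; linarith
  have hpc : p ^ 2 ≤ c := by nlinarith [hpq, hq1, hc0]
  have hsqa := Real.sq_sqrt ha0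
  have hsqb := Real.sq_sqrt hb0.le
  nlinarith [Real.sqrt_nonneg a, Real.sqrt_nonneg b, hpc, hpeq, hsqa, hsqb]
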